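/- An ordering F_1,…,F_t of the facets of a finite simplicial complex Δ is a shelling if and only if it is a recursive coatom ordering of the augmented face lattice L(Δ) (the face poset of Δ together with a minimum element ∅ and a maximum element 1̂). -/

import Mathlib

/-- `IsRAO x y l` : `l` is a recursive atom ordering of the (bounded) interval
`[x,y]` (see Björner–Wachs).  A recursive coatom ordering of a bounded poset
`P` is a recursive atom ordering of its dual. -/
inductive IsRAO {α : Type*} [PartialOrder α] : α → α → List α → Prop where
  | single (x y : α) (h : x ⋖ y) : IsRAO x y [y]
  | step (x y : α) (l : List α) (hxy : x < y) (hcov : ¬ x ⋖ y)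
      (hnd : l.Nodup)
      (hatoms : ∀ a : α, (x ⋖ a ∧ a ≤ y) ↔ a ∈ l)
      (m₁ m₂ : ∀ j : ℕ, j < l.length → List α)
      (hrec : ∀ (j : ℕ) (hj : j < l.length),
        IsRAO (l.get ⟨j, hj⟩) y (m₁ j hj ++ m₂ j hj))
      (hfirst : ∀ (j : ℕ) (hj : j < l.length), ∀ z ∈ m₁ j hj,
        ∃ a ∈ l.take j, a ≤ z)
      (hsecond : ∀ (j : ℕ) (hj : j < l.length), ∀ z ∈ m₂ j hj,
        ¬ ∃ a ∈ l.take j, a ≤ z)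
      (hii : ∀ (j : ℕ) (hj : j < l.length), ∀ a ∈ l.take j, ∀ w : α, w ≤ y →
        a < w → l.get ⟨j, hj⟩ < w →
        ∃ b ∈ l.take j, ∃ z : α, l.get ⟨j, hj⟩ ⋖ z ∧ z ≤ w ∧ b < z) :
      IsRAO x y l


set_option maxHeartbeats 1000000 in
open OrderDual in
lemma coe_covBy_coe_iff {α : Type*} [PartialOrder α] {a b : α} :
    (a : WithTop α) ⋖ (b : WithTop α) ↔ a ⋖ b := by
  constructor
  · rintro ⟨h1, h2⟩
    exact ⟨WithTop.coe_lt_coe.1 h1, fun c hc hcb =>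
      h2 (WithTop.coe_lt_coe.2 hc) (WithTop.coe_lt_coe.2 hcb)⟩
  · rintro ⟨h1, h2⟩
    refine ⟨WithTop.coe_lt_coe.2 h1, ?_⟩
    intro c hac hcb
    lift c to α using (hcb.trans (WithTop.coe_lt_top b)).ne
    exact h2 (WithTop.coe_lt_coe.1 hac) (WithTop.coe_lt_coe.1 hcb)


open OrderDual in
lemma coe_covBy_top_iff {α : Type*} [PartialOrder α] {a : α} :
    (a : WithTop α) ⋖ ⊤ ↔ ∀ b : α, a ≤ b → a = b := by
  constructor
  · rintro ⟨-, h2⟩ b hab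
    by_contra hne
    exact h2 (WithTop.coe_lt_coe.2 (lt_of_le_of_ne hab hne)) (WithTop.coe_lt_top b)
  · intro h
    refine ⟨WithTop.coe_lt_top a, ?_⟩
    intro c hac hct
    lift c to α using hct.ne
    exact absurd (h c (WithTop.coe_lt_coe.1 hac).le) (WithTop.coe_lt_coe.1 hac).ne


lemma list_eq_singleton_of_nodup {α : Type*} {l : List α} (h : l.Nodup) {a : α}
    (hm : ∀ x, x ∈ l ↔ x = a) : l = [a] := by
  match l, h with
  | [], _ => exact absurd ((hm a).mpr rfl) (by simp)
  | [b], _ => rw [(hm b).mp (by simp)]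
  | b :: c :: t, h =>
    have hb := (hm b).mp (by simp)
    have hc := (hm c).mp (by simp)
    subst hb; subst hc
    simp at h


lemma ne_get_of_mem_take {α : Type*} {l : List α} (h : l.Nodup) {a : α} {k : ℕ}
    (hk : k < l.length) (ha : a ∈ l.take k) : a ≠ l.get ⟨k, hk⟩ := by
  obtain ⟨i, hi, hieq⟩ := List.mem_iff_getElem.1 ha
  have hik : i < k := lt_of_lt_of_le hi (by simp [List.length_take])
  rw [List.getElem_take] at hieq
  intro hcc
  have h2 : l[i]'(by omega) = l[k]'hk := by rw [hieq]; exact hcc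
  exact absurd (h.getElem_inj_iff.1 h2) (by omega)

section ComplexAux
open OrderDual
variable {V : Type*} [DecidableEq V] {Δ : Finset (Finset V)}

lemma subtype_covBy_iff (hdown : ∀ F ∈ Δ, ∀ G : Finset V, G ⊆ F → G ∈ Δ)
    {a b : {F : Finset V // F ∈ Δ}} :
    a ⋖ b ↔ a.1 ⊆ b.1 ∧ a.1.card + 1 = b.1.card := by
  constructor
  · rintro ⟨h1, h2⟩
    have hab : a.1 ⊂ b.1 := h1
    obtain ⟨x, hxb, hxa⟩ := Finset.exists_of_ssubset hab
    set c : {F : Finset V // F ∈ Δ} :=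
      ⟨insert x a.1, hdown _ b.2 _ (Finset.insert_subset hxb hab.subset)⟩ with hc
    have hac : a < c := by
      show a.1 ⊂ c.1
      exact Finset.ssubset_insert hxa
    have hcb : c.1 ⊆ b.1 := Finset.insert_subset hxb hab.subset
    have hcbe : c.1 = b.1 := by
      by_contra hne
      exact h2 hac (show c.1 ⊂ b.1 from Finset.ssubset_iff_subset_ne.2 ⟨hcb, hne⟩)
    refine ⟨hab.subset, ?_⟩
    rw [← hcbe, hc]
    simp [Finset.card_insert_of_notMem hxa]
  · rintro ⟨h1, h2⟩
    have hlt : a < b := by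
      show a.1 ⊂ b.1
      refine Finset.ssubset_iff_subset_ne.2 ⟨h1, fun h => by rw [h] at h2; omega⟩
    refine ⟨hlt, fun c hac hcb => ?_⟩
    have h3 : a.1.card < c.1.card := Finset.card_lt_card hac
    have h4 : c.1.card < b.1.card := Finset.card_lt_card hcb
    omega


noncomputable def atomList (hdown : ∀ F ∈ Δ, ∀ G : Finset V, G ⊆ F → G ∈ Δ)
    (G : {F : Finset V // F ∈ Δ}) : List (WithTop {F : Finset V // F ∈ Δ})ᵒᵈ :=
  G.1.toList.attach.map fun v => toDual
    ((⟨G.1.erase v.1, hdown _ G.2 _ (Finset.erase_subset _ _)⟩ :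
      {F : Finset V // F ∈ Δ}) : WithTop {F : Finset V // F ∈ Δ})

lemma atomList_nodup (hdown : ∀ F ∈ Δ, ∀ G : Finset V, G ⊆ F → G ∈ Δ)
    (G : {F : Finset V // F ∈ Δ}) : (atomList hdown G).Nodup := by
  refine List.Nodup.map_on ?_ (List.nodup_attach.2 (Finset.nodup_toList _))
  rintro ⟨v, hv⟩ - ⟨w, hw⟩ - h
  have hv' : v ∈ G.1 := Finset.mem_toList.1 hv
  have h2 : G.1.erase v = G.1.erase w := by
    have := toDual.injective h
    have := WithTop.coe_inj.1 this
    exact congrArg Subtype.val this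
  by_contra hne
  have hvw : v ≠ w := fun h => hne (by simp [h])
  have : v ∈ G.1.erase w := Finset.mem_erase.2 ⟨hvw, hv'⟩
  rw [← h2] at this
  exact (Finset.notMem_erase v G.1) this

lemma atomList_mem (hdown : ∀ F ∈ Δ, ∀ G : Finset V, G ⊆ F → G ∈ Δ)
    (G : {F : Finset V // F ∈ Δ}) (a : (WithTop {F : Finset V // F ∈ Δ})ᵒᵈ) :
    a ∈ atomList hdown G ↔ ∃ H : {F : Finset V // F ∈ Δ},
      a = toDual (H : WithTop {F : Finset V // F ∈ Δ}) ∧ H.1 ⊆ G.1 ∧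
        H.1.card + 1 = G.1.card := by
  constructor
  · intro ha
    obtain ⟨⟨v, hv⟩, -, rfl⟩ := List.mem_map.1 ha
    have hv' : v ∈ G.1 := Finset.mem_toList.1 hv
    exact ⟨_, rfl, Finset.erase_subset _ _, Finset.card_erase_add_one hv'⟩
  · rintro ⟨H, rfl, hsub, hcard⟩
    have hss : H.1 ⊂ G.1 := Finset.ssubset_iff_subset_ne.2 ⟨hsub, fun h => by
      rw [h] at hcard; omega⟩
    obtain ⟨v, hvG, hvH⟩ := Finset.exists_of_ssubset hss
    have h1 : H.1 ⊆ G.1.erase v := fun x hx =>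
      Finset.mem_erase.2 ⟨fun h => hvH (h ▸ hx), hsub hx⟩
    have h2 : H.1 = G.1.erase v := Finset.eq_of_subset_of_card_le h1 (by
      rw [Finset.card_erase_of_mem hvG]; omega)
    exact List.mem_map.2 ⟨⟨v, Finset.mem_toList.2 hvG⟩, by simp, by
      congr 1; exact WithTop.coe_inj.2 (Subtype.ext h2.symm)⟩

lemma emptyface_le (hempty : ∅ ∈ Δ) (c : WithTop {F : Finset V // F ∈ Δ}) :
    ((⟨∅, hempty⟩ : {F : Finset V // F ∈ Δ}) : WithTop {F : Finset V // F ∈ Δ}) ≤ c := by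
  cases c with
  | top => exact le_top
  | coe G => exact WithTop.coe_le_coe.2 (show (∅ : Finset V) ⊆ G.1 from Finset.empty_subset _)


lemma le_empty_dual (hempty : ∅ ∈ Δ) (a : (WithTop {F : Finset V // F ∈ Δ})ᵒᵈ) :
    a ≤ toDual ((⟨∅, hempty⟩ : {F : Finset V // F ∈ Δ}) :
      WithTop {F : Finset V // F ∈ Δ}) :=
  emptyface_le hempty (ofDual a)

lemma dual_atom_iff (hdown : ∀ F ∈ Δ, ∀ G : Finset V, G ⊆ F → G ∈ Δ)
    (hempty : (∅ : Finset V) ∈ Δ) (F : {F : Finset V // F ∈ Δ})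
    (a : (WithTop {F : Finset V // F ∈ Δ})ᵒᵈ) :
    (toDual (F : WithTop {F : Finset V // F ∈ Δ}) ⋖ a ∧
      a ≤ toDual ((⟨∅, hempty⟩ : {F : Finset V // F ∈ Δ}) :
        WithTop {F : Finset V // F ∈ Δ})) ↔
    ∃ H : {F : Finset V // F ∈ Δ},
      a = toDual (H : WithTop {F : Finset V // F ∈ Δ}) ∧ H.1 ⊆ F.1 ∧
        H.1.card + 1 = F.1.card := by
  constructor
  · rintro ⟨hcov, -⟩
    have hcov' : (ofDual a) ⋖ (F : WithTop {F : Finset V // F ∈ Δ}) :=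
      toDual_covBy_toDual_iff.1 hcov
    obtain ⟨H, hH⟩ := WithTop.ne_top_iff_exists.1
      (hcov'.lt.trans (WithTop.coe_lt_top F)).ne
    rw [← hH] at hcov'
    have := (subtype_covBy_iff hdown).1 (coe_covBy_coe_iff.1 hcov')
    exact ⟨H, (congrArg toDual hH).symm, this.1, this.2⟩
  · rintro ⟨H, rfl, h1, h2⟩
    refine ⟨toDual_covBy_toDual_iff.2 (coe_covBy_coe_iff.2
      ((subtype_covBy_iff hdown).2 ⟨h1, h2⟩)), emptyface_le hempty _⟩

end ComplexAux

variable {V : Type*} [DecidableEq V] [Fintype V]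

/-- A shelling of a (possibly nonpure) simplicial complex: an ordering
`F_1,…,F_t` of the facets such that for each `k ≥ 2`, every face of
`⟨F_k⟩ ∩ ⟨F_1,…,F_{k−1}⟩` is contained in a face of that intersection of
cardinality `|F_k| − 1` (i.e. the intersection is pure of dimension
`dim F_k − 1`). -/
def IsShelling (l : List (Finset V)) : Prop :=
  ∀ (k : ℕ) (hk : k < l.length), 1 ≤ k →
    ∀ G ⊆ l.get ⟨k, hk⟩, (∃ F' ∈ l.take k, G ⊆ F') →
      ∃ G' : Finset V, G ⊆ G' ∧ G' ⊆ l.get ⟨k, hk⟩ ∧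
        G'.card + 1 = (l.get ⟨k, hk⟩).card ∧ ∃ F' ∈ l.take k, G' ⊆ F'

/-- The augmented face lattice of `Δ`: all faces ordered by inclusion together
with an added top element. -/
abbrev FaceLattice (Δ : Finset (Finset V)) : Type _ :=
  WithTop {F : Finset V // F ∈ Δ}

open OrderDual

lemma boolRAO {Δ : Finset (Finset V)} (hdown : ∀ F ∈ Δ, ∀ G : Finset V, G ⊆ F → G ∈ Δ)
    (hempty : (∅ : Finset V) ∈ Δ) :
    ∀ n : ℕ, 0 < n → ∀ F : {F : Finset V // F ∈ Δ}, F.1.card = n →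
    ∀ m : List (WithTop {F : Finset V // F ∈ Δ})ᵒᵈ, m.Nodup →
    (∀ a, (toDual (F : WithTop {F : Finset V // F ∈ Δ}) ⋖ a ∧
      a ≤ toDual ((⟨∅, hempty⟩ : {F : Finset V // F ∈ Δ}) :
        WithTop {F : Finset V // F ∈ Δ})) ↔ a ∈ m) →
    IsRAO (toDual (F : WithTop {F : Finset V // F ∈ Δ}))
      (toDual ((⟨∅, hempty⟩ : {F : Finset V // F ∈ Δ}) :
        WithTop {F : Finset V // F ∈ Δ})) m := by
  intro n
  induction n using Nat.strong_induction_on with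
  | _ n IH =>
  intro hn F hF m hm hmem
  classical
  by_cases h1 : n = 1
  · subst h1
    have key : ∀ a, a ∈ m ↔ a = toDual ((⟨∅, hempty⟩ : {F : Finset V // F ∈ Δ}) :
        WithTop {F : Finset V // F ∈ Δ}) := by
      intro a
      rw [← hmem a, dual_atom_iff hdown hempty]
      constructor
      · rintro ⟨H, rfl, -, hc⟩
        rw [hF] at hc
        have : H.1 = ∅ := Finset.card_eq_zero.1 (by omega)
        congr 1
        exact congrArg _ (Subtype.ext this)
      · rintro rfl
        exact ⟨⟨∅, hempty⟩, rfl, Finset.empty_subset _, by simp [hF]⟩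
    rw [list_eq_singleton_of_nodup hm key]
    exact IsRAO.single _ _ (toDual_covBy_toDual_iff.2 (coe_covBy_coe_iff.2
      ((subtype_covBy_iff hdown).2 ⟨Finset.empty_subset _, by simp [hF]⟩)))
  · have hn2 : 2 ≤ n := by omega
    have hget : ∀ j (hj : j < m.length), ∃ G : {F : Finset V // F ∈ Δ},
        m.get ⟨j, hj⟩ = toDual (G : WithTop {F : Finset V // F ∈ Δ}) ∧
          G.1 ⊆ F.1 ∧ G.1.card + 1 = n := by
      intro j hj
      have := (dual_atom_iff hdown hempty F _).1 ((hmem _).2 (m.get_mem ⟨j, hj⟩))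
      rwa [hF] at this
    set E : {F : Finset V // F ∈ Δ} := ⟨∅, hempty⟩ with hE
    refine IsRAO.step _ _ _ ?_ ?_ hm hmem
      (fun j hj => (atomList hdown (Classical.choose (hget j hj))).filter
        (fun z => decide (∃ a ∈ m.take j, a ≤ z)))
      (fun j hj => (atomList hdown (Classical.choose (hget j hj))).filter
        (fun z => !decide (∃ a ∈ m.take j, a ≤ z)))
      ?_ ?_ ?_ ?_
    · -- x < y
      refine OrderDual.toDual_lt_toDual.2 (WithTop.coe_lt_coe.2 ?_)
      show E.1 ⊂ F.1
      exact Finset.empty_ssubset.2 (Finset.card_pos.1 (by omega))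
    · -- ¬ cover
      intro hc
      have := (subtype_covBy_iff hdown).1 (coe_covBy_coe_iff.1
        (toDual_covBy_toDual_iff.1 hc))
      rw [hF] at this
      simp [hE] at this
      omega
    · -- hrec
      intro j hj
      obtain ⟨hGj, hGF, hGcard⟩ := Classical.choose_spec (hget j hj)
      set G := Classical.choose (hget j hj)
      have hperm : List.Perm
          ((atomList hdown G).filter (fun z => decide (∃ a ∈ m.take j, a ≤ z)) ++
            (atomList hdown G).filter (fun z => !decide (∃ a ∈ m.take j, a ≤ z)))
          (atomList hdown G) := List.filter_append_perm _ _
      rw [hGj]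
      refine IH (n-1) (by omega) (by omega) G (by omega) _
        (hperm.nodup_iff.2 (atomList_nodup hdown G)) ?_
      intro a
      rw [dual_atom_iff hdown hempty, hperm.mem_iff, atomList_mem]
    · -- hfirst
      intro j hj z hz
      have := List.mem_filter.1 hz
      exact decide_eq_true_iff.1 this.2
    · -- hsecond
      intro j hj z hz
      have := List.mem_filter.1 hz
      simpa using this.2
    · -- hii
      intro j hj a ha w hwy haw hjw
      obtain ⟨Ci, rfl, hCiF, hCicard⟩ :=
        (dual_atom_iff hdown hempty F _).1 ((hmem _).2 (List.take_subset j m ha))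
      rw [hF] at hCicard
      obtain ⟨Cj, hCj, hCjF, hCjcard⟩ := hget j hj
      -- a ≠ m.get j
      have hne : Ci ≠ Cj := by
        obtain ⟨i, hi, hieq⟩ := List.mem_iff_getElem.1 ha
        have hij : i < j := lt_of_lt_of_le hi (by simp [List.length_take])
        intro hcc
        rw [List.getElem_take] at hieq
        have hgj : m.get ⟨j, hj⟩ = m[j] := rfl
        have : m[i]'(by omega) = m[j] := by
          rw [hieq, hcc, ← hgj, hCj]
        exact absurd (hm.getElem_inj_iff.1 this) (by omega)
      have hCC : Ci.1 ≠ Cj.1 := fun h => hne (Subtype.ext h)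
      -- w is a face
      have hwj : (ofDual w) < (Cj : WithTop {F : Finset V // F ∈ Δ}) := by
        rw [hCj] at hjw; exact hjw
      have hwi : (ofDual w) < (Ci : WithTop {F : Finset V // F ∈ Δ}) := haw
      obtain ⟨W, hW⟩ := WithTop.ne_top_iff_exists.1 (hwj.trans (WithTop.coe_lt_top _)).ne
      rw [← hW] at hwj hwi
      have hWj : W.1 ⊆ Ci.1 ∩ Cj.1 := by
        have h1 : W < Cj := WithTop.coe_lt_coe.1 hwj
        have h2 : W < Ci := WithTop.coe_lt_coe.1 hwi
        exact Finset.subset_inter (le_of_lt (Subtype.coe_lt_coe.2 h2))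
          (le_of_lt (Subtype.coe_lt_coe.2 h1))
      set Z : {F : Finset V // F ∈ Δ} :=
        ⟨Ci.1 ∩ Cj.1, hdown _ F.2 _ (Finset.inter_subset_left.trans hCiF)⟩ with hZ
      have hUle : (Ci.1 ∪ Cj.1).card ≤ n :=
        hF ▸ Finset.card_le_card (Finset.union_subset hCiF hCjF)
      have hUge : n ≤ (Ci.1 ∪ Cj.1).card := by
        by_contra hlt
        push_neg at hlt
        have h2 : Ci.1 ∪ Cj.1 = Ci.1 :=
          (Finset.eq_of_subset_of_card_le Finset.subset_union_left (by omega)).symm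
        have h3 : Cj.1 ⊆ Ci.1 := by rw [← h2]; exact Finset.subset_union_right
        exact hCC (Finset.eq_of_subset_of_card_le h3 (by omega)).symm
      have hZcard : Z.1.card + 1 = Cj.1.card := by
        have := Finset.card_inter_add_card_union Ci.1 Cj.1
        show (Ci.1 ∩ Cj.1).card + 1 = Cj.1.card
        omega
      refine ⟨toDual (Ci : WithTop {F : Finset V // F ∈ Δ}), ha,
        toDual (Z : WithTop {F : Finset V // F ∈ Δ}), ?_, ?_, ?_⟩
      · rw [hCj]
        exact toDual_covBy_toDual_iff.2 (coe_covBy_coe_iff.2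
          ((subtype_covBy_iff hdown).2 ⟨Finset.inter_subset_right, hZcard⟩))
      · show (ofDual w) ≤ (Z : WithTop {F : Finset V // F ∈ Δ})
        rw [← hW]
        exact WithTop.coe_le_coe.2 (show W ≤ Z from hWj)
      · apply OrderDual.toDual_lt_toDual.2
        apply WithTop.coe_lt_coe.2
        show Z.1 ⊂ Ci.1
        refine Finset.ssubset_iff_subset_ne.2 ⟨Finset.inter_subset_left, fun h => ?_⟩
        have hc := congrArg Finset.card h
        omega

/-- An ordering of the facets of a finite simplicial complex is a shelling if
and only if it is a recursive coatom ordering of the augmented face lattice,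
i.e. a recursive atom ordering of its dual (from the top element down to the
empty face). -/
theorem stmt_13 (Δ : Finset (Finset V))
    (hdown : ∀ F ∈ Δ, ∀ G : Finset V, G ⊆ F → G ∈ Δ) (hempty : ∅ ∈ Δ)
    (l : List {F : Finset V // F ∈ Δ}) (hnd : l.Nodup)
    (hfacets : ∀ F : {F : Finset V // F ∈ Δ},
      (∀ G ∈ Δ, F.1 ⊆ G → F.1 = G) ↔ F ∈ l) :
    IsShelling (l.map Subtype.val) ↔
      IsRAO (α := (FaceLattice Δ)ᵒᵈ) (OrderDual.toDual (⊤ : FaceLattice Δ))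
        (OrderDual.toDual ((⟨∅, hempty⟩ : {F : Finset V // F ∈ Δ}) : FaceLattice Δ))
        (l.map fun F => OrderDual.toDual ((F : {F : Finset V // F ∈ Δ}) : FaceLattice Δ)) := by

  classical
  set E : {F : Finset V // F ∈ Δ} := ⟨∅, hempty⟩ with hE
  by_cases hone : ∀ G ∈ Δ, (∅ : Finset V) ⊆ G → (∅ : Finset V) = G
  · -- trivial complex : Δ = {∅}
    have hl : l = [E] := list_eq_singleton_of_nodup hnd (fun x => by
      constructor
      · intro _
        exact Subtype.ext (hone x.1 x.2 (Finset.empty_subset _)).symm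
      · rintro rfl
        exact (hfacets E).1 (fun G hG h => hone G hG h))
    subst hl
    constructor
    · intro _
      exact IsRAO.single _ _ (toDual_covBy_toDual_iff.2 (coe_covBy_top_iff.2
        (fun b hb => Subtype.ext (hone b.1 b.2 hb))))
    · intro _ k hk hk1
      simp at hk
      omega
  · -- nontrivial complex
    have hfne : ∀ F ∈ l, F.1 ≠ ∅ := by
      intro F hF h0
      apply hone
      intro G hG h
      have := (hfacets F).2 hF G hG (h0 ▸ Finset.empty_subset G)
      rwa [h0] at this
    constructor
    · -- shelling → RAO
      intro hsh
      refine IsRAO.step _ _ _ ?_ ?_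
        (hnd.map (fun a b h => WithTop.coe_injective (toDual.injective h)))
        ?_
        (fun j hj => (atomList hdown (l.get ⟨j, by simpa using hj⟩)).filter
          (fun z => decide (∃ a ∈ ((l.map fun F =>
            toDual ((F : {F : Finset V // F ∈ Δ}) : FaceLattice Δ)).take j), a ≤ z)))
        (fun j hj => (atomList hdown (l.get ⟨j, by simpa using hj⟩)).filter
          (fun z => !decide (∃ a ∈ ((l.map fun F =>
            toDual ((F : {F : Finset V // F ∈ Δ}) : FaceLattice Δ)).take j), a ≤ z)))
        ?_ ?_ ?_ ?_
      · exact OrderDual.toDual_lt_toDual.2 (WithTop.coe_lt_top E)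
      · intro hc
        have hc' : ((E : FaceLattice Δ)) ⋖ ⊤ := toDual_covBy_toDual_iff.1 hc
        exact hone (fun G hG h => Subtype.ext_iff.1 (coe_covBy_top_iff.1 hc' ⟨G, hG⟩ h))
      · -- atoms = facets
        intro a
        constructor
        · rintro ⟨hcv, -⟩
          have hcv' : (ofDual a) ⋖ (⊤ : FaceLattice Δ) := toDual_covBy_toDual_iff.1 hcv
          cases hc : ofDual a with
          | none => rw [hc] at hcv'; exact absurd hcv'.lt (lt_irrefl _)
          | some F =>
            rw [hc] at hcv'
            have hmax : ∀ G ∈ Δ, F.1 ⊆ G → F.1 = G := by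
              intro G hG hsub
              exact Subtype.ext_iff.1 (coe_covBy_top_iff.1 hcv' ⟨G, hG⟩ hsub)
            exact List.mem_map.2 ⟨F, (hfacets F).1 hmax, congrArg toDual hc.symm⟩
        · intro ha
          obtain ⟨F, hFl, rfl⟩ := List.mem_map.1 ha
          have hmax := (hfacets F).2 hFl
          refine ⟨toDual_covBy_toDual_iff.2 (coe_covBy_top_iff.2 ?_),
            le_empty_dual hempty _⟩
          intro b hb
          exact Subtype.ext (hmax b.1 b.2 hb)
      · -- hrec
        intro j hj
        have jl : j < l.length := by simpa using hj
        set Fj := l.get ⟨j, jl⟩ with hFj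
        have hget : (l.map fun F =>
            toDual ((F : {F : Finset V // F ∈ Δ}) : FaceLattice Δ)).get ⟨j, hj⟩ =
            toDual ((Fj : {F : Finset V // F ∈ Δ}) : FaceLattice Δ) := by
          simp [hFj]
        have hperm : List.Perm
            ((atomList hdown Fj).filter (fun z => decide (∃ a ∈ ((l.map fun F =>
                toDual ((F : {F : Finset V // F ∈ Δ}) : FaceLattice Δ)).take j), a ≤ z)) ++
              (atomList hdown Fj).filter (fun z => !decide (∃ a ∈ ((l.map fun F =>
                toDual ((F : {F : Finset V // F ∈ Δ}) : FaceLattice Δ)).take j), a ≤ z)))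
            (atomList hdown Fj) := List.filter_append_perm _ _
        rw [hget]
        refine boolRAO hdown hempty Fj.1.card ?_ Fj rfl _
          (hperm.nodup_iff.2 (atomList_nodup hdown Fj)) ?_
        · exact Finset.card_pos.2 (Finset.nonempty_iff_ne_empty.2
            (hfne Fj (l.get_mem ⟨j, jl⟩)))
        · intro a
          rw [dual_atom_iff hdown hempty, hperm.mem_iff, atomList_mem]
      · -- hfirst
        intro j hj z hz
        exact decide_eq_true_iff.1 (List.mem_filter.1 hz).2
      · -- hsecond
        intro j hj z hz
        simpa using (List.mem_filter.1 hz).2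
      · -- hii from shelling
        intro j hj a ha w hwy haw hjw
        have jl : j < l.length := by simpa using hj
        set Fj := l.get ⟨j, jl⟩ with hFj
        have hget : (l.map fun F =>
            toDual ((F : {F : Finset V // F ∈ Δ}) : FaceLattice Δ)).get ⟨j, hj⟩ =
            toDual ((Fj : {F : Finset V // F ∈ Δ}) : FaceLattice Δ) := by
          simp [hFj]
        rw [← List.map_take] at ha
        obtain ⟨B, hBmem, rfl⟩ := List.mem_map.1 ha
        rw [hget] at hjw
        have hwj : (ofDual w) < ((Fj : {F : Finset V // F ∈ Δ}) : FaceLattice Δ) := hjw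
        have hwi : (ofDual w) < ((B : {F : Finset V // F ∈ Δ}) : FaceLattice Δ) := haw
        obtain ⟨W, hW⟩ := WithTop.ne_top_iff_exists.1 (hwj.trans (WithTop.coe_lt_top _)).ne
        rw [← hW] at hwj hwi
        have hWj : W.1 ⊆ Fj.1 := le_of_lt (Subtype.coe_lt_coe.2 (WithTop.coe_lt_coe.1 hwj))
        have hWi : W.1 ⊆ B.1 := le_of_lt (Subtype.coe_lt_coe.2 (WithTop.coe_lt_coe.1 hwi))
        have hj1 : 1 ≤ j := by
          by_contra h0
          have hj0 : j = 0 := by omega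
          subst hj0
          simp at hBmem
        have jlv : j < (l.map Subtype.val).length := by simpa using jl
        have hgv : (l.map Subtype.val).get ⟨j, jlv⟩ = Fj.1 := by
          simp only [List.get_eq_getElem, List.getElem_map]
          rfl
        obtain ⟨G', hWG', hG'Fj, hG'card, F', hF'mem, hG'F'⟩ :=
          hsh j jlv hj1 W.1 (by rw [hgv]; exact hWj)
            ⟨B.1, by rw [← List.map_take]; exact List.mem_map_of_mem hBmem, hWi⟩
        rw [hgv] at hG'Fj hG'card
        rw [← List.map_take] at hF'mem
        obtain ⟨B', hB'mem, rfl⟩ := List.mem_map.1 hF'mem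
        have hG'Δ : G' ∈ Δ := hdown _ Fj.2 _ hG'Fj
        have hB'ne : G' ≠ B'.1 := by
          intro hcc
          have h1 : B'.1 ⊆ Fj.1 := hcc ▸ hG'Fj
          have h2 : B' = Fj := Subtype.ext ((hfacets B').2 (List.take_subset j l hB'mem)
            Fj.1 Fj.2 h1)
          exact ne_get_of_mem_take hnd jl hB'mem h2
        refine ⟨toDual ((B' : {F : Finset V // F ∈ Δ}) : FaceLattice Δ),
          by rw [← List.map_take]; exact List.mem_map_of_mem hB'mem,
          toDual ((⟨G', hG'Δ⟩ : {F : Finset V // F ∈ Δ}) : FaceLattice Δ), ?_, ?_, ?_⟩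
        · rw [hget]
          exact toDual_covBy_toDual_iff.2 (coe_covBy_coe_iff.2
            ((subtype_covBy_iff hdown).2 ⟨hG'Fj, hG'card⟩))
        · show (ofDual w) ≤ ((⟨G', hG'Δ⟩ : {F : Finset V // F ∈ Δ}) : FaceLattice Δ)
          rw [← hW]
          exact WithTop.coe_le_coe.2 (show W.1 ⊆ G' from hWG')
        · exact OrderDual.toDual_lt_toDual.2 (WithTop.coe_lt_coe.2
            (show (⟨G', hG'Δ⟩ : {F : Finset V // F ∈ Δ}).1 ⊂ B'.1 from
              Finset.ssubset_iff_subset_ne.2 ⟨hG'F', hB'ne⟩))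
    · -- RAO → shelling
      intro h
      generalize hm : (l.map fun F =>
        toDual ((F : {F : Finset V // F ∈ Δ}) : FaceLattice Δ)) = m at h
      intro k hk hk1 G hG hGF
      have kl : k < l.length := by simpa using hk
      have hgv : (l.map Subtype.val).get ⟨k, hk⟩ = (l.get ⟨k, kl⟩).1 := by
        simp only [List.get_eq_getElem, List.getElem_map]
      set Fk := l.get ⟨k, kl⟩ with hFk
      have hG2 : G ⊆ Fk.1 := by rw [← hgv]; exact hG
      obtain ⟨F', hF'mem, hGF'⟩ := hGF
      rw [← List.map_take] at hF'mem
      obtain ⟨B, hBmem, rfl⟩ := List.mem_map.1 hF'mem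
      cases h with
      | single _ _ hc =>
        -- contradiction with hone
        exfalso
        have hc' : ((E : FaceLattice Δ)) ⋖ ⊤ := toDual_covBy_toDual_iff.1 hc
        exact hone (fun G hG h => Subtype.ext_iff.1 (coe_covBy_top_iff.1 hc' ⟨G, hG⟩ h))
      | step _ _ _ hxy hcov hnd' hatoms m₁ m₂ hrec hfirst hsecond hii =>
        have hkm : k < m.length := by rw [← hm]; simpa using kl
        have hgetm : m.get ⟨k, hkm⟩ =
            toDual ((Fk : {F : Finset V // F ∈ Δ}) : FaceLattice Δ) := by
          rw [List.get_of_eq hm.symm]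
          simp only [List.get_eq_getElem, List.getElem_map]
          rfl
        have hGΔ : G ∈ Δ := hdown _ Fk.2 _ hG2
        -- B ≠ Fk
        have hBFk : B ≠ Fk := by
          intro hcc
          have : toDual ((B : {F : Finset V // F ∈ Δ}) : FaceLattice Δ) ∈ m.take k := by
            rw [← hm, ← List.map_take]; exact List.mem_map_of_mem hBmem
          exact ne_get_of_mem_take hnd' hkm this (by rw [hgetm, hcc])
        -- G strictly below B and Fk
        have hGB : G ⊂ B.1 := by
          refine Finset.ssubset_iff_subset_ne.2 ⟨hGF', fun hcc => ?_⟩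
          have h1 : B.1 ⊆ Fk.1 := hcc ▸ hG2
          exact hBFk (Subtype.ext ((hfacets B).2 (List.take_subset k l hBmem) Fk.1 Fk.2 h1))
        have hGFk : G ⊂ Fk.1 := by
          refine Finset.ssubset_iff_subset_ne.2 ⟨hG2, fun hcc => ?_⟩
          have h1 : Fk.1 ⊆ B.1 := hcc ▸ hGF'
          exact hBFk (Subtype.ext ((hfacets Fk).2 (l.get_mem ⟨k, kl⟩) B.1 B.2 h1).symm)
        have hBtake : toDual ((B : {F : Finset V // F ∈ Δ}) : FaceLattice Δ) ∈ m.take k := by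
          rw [← hm, ← List.map_take]; exact List.mem_map_of_mem hBmem
        obtain ⟨b, hbmem, z, hzcov, hzw, hbz⟩ := hii k hkm _ hBtake
          (toDual ((⟨G, hGΔ⟩ : {F : Finset V // F ∈ Δ}) : FaceLattice Δ))
          (le_empty_dual hempty _)
          (OrderDual.toDual_lt_toDual.2 (WithTop.coe_lt_coe.2 hGB))
          (by rw [hgetm]
              exact OrderDual.toDual_lt_toDual.2 (WithTop.coe_lt_coe.2 hGFk))
        -- decode b
        have hbmem' := hbmem
        rw [← hm, ← List.map_take] at hbmem'
        obtain ⟨B', hB'mem, rfl⟩ := List.mem_map.1 hbmem'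
        -- decode z
        have hbz' : (ofDual z) < ((B' : {F : Finset V // F ∈ Δ}) : FaceLattice Δ) := hbz
        obtain ⟨Z, hZ⟩ := WithTop.ne_top_iff_exists.1 (hbz'.trans (WithTop.coe_lt_top _)).ne
        rw [← hZ] at hbz'
        have hZB' : Z.1 ⊂ B'.1 := Subtype.coe_lt_coe.2 (WithTop.coe_lt_coe.1 hbz')
        -- cover gives codim 1 in Fk
        rw [hgetm] at hzcov
        have hzcov' : toDual ((Fk : {F : Finset V // F ∈ Δ}) : FaceLattice Δ) ⋖
            toDual ((Z : {F : Finset V // F ∈ Δ}) : FaceLattice Δ) := by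
          rw [hZ]
          exact hzcov
        have hZFk := (subtype_covBy_iff hdown).1 (coe_covBy_coe_iff.1
          (toDual_covBy_toDual_iff.1 hzcov'))
        -- z ≤ w gives G ⊆ Z
        have hGZ : G ⊆ Z.1 := by
          have : ((⟨G, hGΔ⟩ : {F : Finset V // F ∈ Δ}) : FaceLattice Δ) ≤ ofDual z := hzw
          rw [← hZ] at this
          exact (WithTop.coe_le_coe.1 this : (⟨G, hGΔ⟩ : {F : Finset V // F ∈ Δ}) ≤ Z)
        refine ⟨Z.1, hGZ, by rw [hgv]; exact hZFk.1, by rw [hgv]; exact hZFk.2,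
          B'.1, ?_, hZB'.subset⟩
        rw [← List.map_take]
        exact List.mem_map_of_mem hB'mem
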